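/- Let ℓ : ℝ × ℝ → [0, M] be a bounded loss function, and let F be a hypothesis class of functions f : X → {0,1}. For two probability distributions S and T on X × Y, the difference of expected losses satisfies |E_{(x,y)∼T} ℓ(f(x), y) − E_{(x,y)∼S} ℓ(f(x), y)| ≤ (M/2) · d_{FΔF}(S, T), where d_{FΔF}(S, T) = 2 · sup_{A ∈ A_{FΔF}} |P_S(A) − P_T(A)| and the supremum over the symmetric-difference hypothesis class dominates the discrepancy of all superlevel sets {(x,y) : ℓ(f(x),y) > t}. -/

import Mathlib

open MeasureTheory

/-- bound on the difference of expected losses by the FΔF distance. -/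
theorem loss_diff_le_dFF {X Y : Type*} [MeasurableSpace X] [MeasurableSpace Y]
    (S T : Measure (X × Y)) [IsProbabilityMeasure S] [IsProbabilityMeasure T]
    (M : ℝ) (hM : 0 ≤ M) (ℓ : ℝ → Y → ℝ)
    (hℓ : ∀ a y, ℓ a y ∈ Set.Icc 0 M)
    (F : Set (X → ℝ)) (𝒜 : Set (Set (X × Y)))
    (hmeas : ∀ A ∈ 𝒜, MeasurableSet A)
    (hsup : ∀ t ∈ Set.Icc (0:ℝ) M, ∀ g ∈ F, {p : X × Y | ℓ (g p.1) p.2 > t} ∈ 𝒜)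
    (f : X → ℝ) (hf : f ∈ F)
    (hint1 : Integrable (fun p => ℓ (f p.1) p.2) S)
    (hint2 : Integrable (fun p => ℓ (f p.1) p.2) T) :
    |(∫ p, ℓ (f p.1) p.2 ∂T) - ∫ p, ℓ (f p.1) p.2 ∂S| ≤
      (M / 2) * (2 * sSup {r : ℝ | ∃ A ∈ 𝒜, r = |(S A).toReal - (T A).toReal|}) := by
  set D := sSup {r : ℝ | ∃ A ∈ 𝒜, r = |(S A).toReal - (T A).toReal|} with hD
  set g : ℝ → ℝ := fun t => (T {p : X × Y | t < ℓ (f p.1) p.2}).toReal with hg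
  set h : ℝ → ℝ := fun t => (S {p : X × Y | t < ℓ (f p.1) p.2}).toReal with hh
  -- layer cake
  have hnnT : 0 ≤ᵐ[T] fun p : X × Y => ℓ (f p.1) p.2 :=
    Filter.Eventually.of_forall fun p => (hℓ _ _).1
  have hnnS : 0 ≤ᵐ[S] fun p : X × Y => ℓ (f p.1) p.2 :=
    Filter.Eventually.of_forall fun p => (hℓ _ _).1
  have hT : (∫ p, ℓ (f p.1) p.2 ∂T) = ∫ t in Set.Ioi 0, g t :=
    hint2.integral_eq_integral_meas_lt hnnT
  have hS : (∫ p, ℓ (f p.1) p.2 ∂S) = ∫ t in Set.Ioi 0, h t :=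
    hint1.integral_eq_integral_meas_lt hnnS
  -- vanishing above M
  have hempty : ∀ t, M ≤ t → {p : X × Y | t < ℓ (f p.1) p.2} = ∅ := by
    intro t ht
    ext p
    simp only [Set.mem_setOf_eq, Set.mem_empty_iff_false, iff_false, not_lt]
    exact le_trans (hℓ _ _).2 ht
  have hrestr : ∀ (μ : Measure (X × Y)),
      (∫ t in Set.Ioi (0:ℝ), (μ {p : X × Y | t < ℓ (f p.1) p.2}).toReal) =
        ∫ t in Set.Ioc (0:ℝ) M, (μ {p : X × Y | t < ℓ (f p.1) p.2}).toReal := by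
    intro μ
    rw [setIntegral_eq_of_subset_of_ae_diff_eq_zero nullMeasurableSet_Ioi
        Set.Ioc_subset_Ioi_self ?_]
    refine Filter.Eventually.of_forall fun t ht => ?_
    have htM : M ≤ t := by
      rcases ht with ⟨ht1, ht2⟩
      simp only [Set.mem_Ioi] at ht1
      simp only [Set.mem_Ioc, not_and, not_le] at ht2
      exact le_of_lt (ht2 ht1)
    rw [hempty t htM]
    simp
  have hTg : (∫ t in Set.Ioi (0:ℝ), g t) = ∫ t in Set.Ioc (0:ℝ) M, g t := hrestr T
  have hSh : (∫ t in Set.Ioi (0:ℝ), h t) = ∫ t in Set.Ioc (0:ℝ) M, h t := hrestr S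
  -- measurability and integrability of g, h on Ioc 0 M
  haveI : IsFiniteMeasure (volume.restrict (Set.Ioc (0:ℝ) M)) := by
    constructor
    rw [Measure.restrict_apply_univ, Real.volume_Ioc]
    exact ENNReal.ofReal_lt_top
  have hmeasg : ∀ (μ : Measure (X × Y)),
      Measurable fun t : ℝ => (μ {p : X × Y | t < ℓ (f p.1) p.2}).toReal := by
    intro μ
    refine Measurable.ennreal_toReal (Antitone.measurable fun s t hst => ?_)
    exact measure_mono fun p hp => lt_of_le_of_lt hst hp
  have hintg : ∀ (μ : Measure (X × Y)) [IsProbabilityMeasure μ],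
      IntegrableOn (fun t : ℝ => (μ {p : X × Y | t < ℓ (f p.1) p.2}).toReal)
        (Set.Ioc (0:ℝ) M) volume := by
    intro μ _
    refine ⟨(hmeasg μ).aestronglyMeasurable, ?_⟩
    refine HasFiniteIntegral.of_bounded (C := 1) ?_
    refine Filter.Eventually.of_forall fun t => ?_
    rw [Real.norm_eq_abs, abs_of_nonneg ENNReal.toReal_nonneg]
    exact ENNReal.toReal_le_of_le_ofReal zero_le_one (by simpa using prob_le_one)
  -- bound on the pointwise difference
  have hbdd : BddAbove {r : ℝ | ∃ A ∈ 𝒜, r = |(S A).toReal - (T A).toReal|} := by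
    refine ⟨1, fun r hr => ?_⟩
    rcases hr with ⟨A, _, rfl⟩
    have h1 : (S A).toReal ≤ 1 :=
      ENNReal.toReal_le_of_le_ofReal zero_le_one (by simpa using prob_le_one)
    have h2 : (T A).toReal ≤ 1 :=
      ENNReal.toReal_le_of_le_ofReal zero_le_one (by simpa using prob_le_one)
    have := abs_sub_abs_le_abs_sub (S A).toReal (T A).toReal
    rw [abs_sub_le_iff]
    constructor <;> nlinarith [ENNReal.toReal_nonneg (a := S A), ENNReal.toReal_nonneg (a := T A)]
  have hpt : ∀ t ∈ Set.Ioc (0:ℝ) M, |g t - h t| ≤ D := by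
    intro t ht
    have htIcc : t ∈ Set.Icc (0:ℝ) M := ⟨le_of_lt ht.1, ht.2⟩
    have hA : {p : X × Y | ℓ (f p.1) p.2 > t} ∈ 𝒜 := hsup t htIcc f hf
    have : |(S {p : X × Y | ℓ (f p.1) p.2 > t}).toReal -
        (T {p : X × Y | ℓ (f p.1) p.2 > t}).toReal| ∈
        {r : ℝ | ∃ A ∈ 𝒜, r = |(S A).toReal - (T A).toReal|} := ⟨_, hA, rfl⟩
    have hle := le_csSup hbdd this
    rw [abs_sub_comm] at hle
    exact hle
  -- put it together
  rw [hT, hS, hTg, hSh, ← integral_sub (hintg T) (hintg S)]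
  have hbound : ‖∫ t in Set.Ioc (0:ℝ) M, (g t - h t)‖ ≤
      D * (volume (Set.Ioc (0:ℝ) M)).toReal := by
    refine norm_setIntegral_le_of_norm_le_const ?_ (fun t ht => ?_)
    · rw [Real.volume_Ioc]; exact ENNReal.ofReal_lt_top
    · rw [Real.norm_eq_abs]; exact hpt t ht
  rw [Real.norm_eq_abs] at hbound
  have hvol : (volume (Set.Ioc (0:ℝ) M)).toReal = M := by
    rw [Real.volume_Ioc, sub_zero, ENNReal.toReal_ofReal hM]
  rw [hvol] at hbound
  calc |∫ t in Set.Ioc (0:ℝ) M, (g t - h t)| ≤ D * M := hbound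
    _ = (M / 2) * (2 * D) := by ring
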